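/- If the human policy π_H is perfectly fair, i.e., α(π_H) = 0, then an algorithmic policy π_A is compliance-robustly fair with respect to π_H if and only if π_A(x,a) = π_H(x,a) for all x ∈ X and a ∈ A. -/

import Mathlib

open Classical Finset

noncomputable section

def groupAvg {X : Type*} [Fintype X] (P : X → Bool → ℝ) (π : X → Bool → ℝ) (a : Bool) : ℝ :=
  ∑ x, π x a * P x a

def unfairness {X : Type*} [Fintype X] (P : X → Bool → ℝ) (π : X → Bool → ℝ) : ℝ :=
  |groupAvg P π true - groupAvg P π false|

def combine {X : Type*} (πA πH : X → Bool → ℝ) (c : X → Bool → Bool) : X → Bool → ℝ :=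
  fun x a => if c x a then πA x a else πH x a

theorem stmt2
    {X : Type*} [Fintype X] [Nonempty X] (P : X → Bool → ℝ)
    (hP : ∀ x a, 0 < P x a) (hPsum : ∀ a, ∑ x, P x a = 1)
    (πH πA : X → Bool → ℝ)
    (hπH : ∀ x a, 0 ≤ πH x a ∧ πH x a ≤ 1) (hπA : ∀ x a, 0 ≤ πA x a ∧ πA x a ≤ 1)
    (hord : groupAvg P πH false ≤ groupAvg P πH true)
    (hfair : unfairness P πH = 0) :
    (∀ c : X → Bool → Bool, unfairness P (combine πA πH c) ≤ unfairness P πH) ↔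
      (∀ x a, πA x a = πH x a) := by
  constructor
  · intro h
    by_contra hne
    push_neg at hne
    obtain ⟨x₀, a₀, hd⟩ := hne
    set c : X → Bool → Bool := fun x a => decide (x = x₀ ∧ a = a₀) with hc
    have hdiff : ∀ a, groupAvg P (combine πA πH c) a =
        groupAvg P πH a + (if a = a₀ then (πA x₀ a₀ - πH x₀ a₀) * P x₀ a₀ else 0) := by
      intro a
      have hpt : ∀ x, (combine πA πH c) x a * P x a =
          πH x a * P x a +
            (if x = x₀ then (if a = a₀ then (πA x₀ a₀ - πH x₀ a₀) * P x₀ a₀ else 0) else 0) := by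
        intro x
        simp only [combine, hc, decide_eq_true_eq]
        by_cases hx : x = x₀ <;> by_cases ha : a = a₀
        · subst hx; subst ha; simp; ring
        · simp [hx, ha]
        · simp [hx, ha]
        · simp [hx, ha]
      unfold groupAvg
      rw [Finset.sum_congr rfl (fun x _ => hpt x), Finset.sum_add_distrib,
        Finset.sum_ite_eq' Finset.univ x₀]
      simp
    have heq : groupAvg P πH true = groupAvg P πH false := by
      unfold unfairness at hfair
      rwa [abs_eq_zero, sub_eq_zero] at hfair
    have hC := h c
    rw [hfair] at hC
    unfold unfairness at hC
    rw [hdiff true, hdiff false, heq] at hC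
    have hpos : (πA x₀ a₀ - πH x₀ a₀) * P x₀ a₀ ≠ 0 :=
      mul_ne_zero (sub_ne_zero_of_ne hd) (ne_of_gt (hP x₀ a₀))
    cases a₀ <;> simp at hC <;> exact hpos (abs_eq_zero.mp (le_antisymm (by rwa [abs_mul]) (abs_nonneg _)))
  · intro h c
    have : combine πA πH c = πH := by
      funext x a; simp [combine, h]
    rw [this]

end
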